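/- arXiv:2406.17964 — 6 statements merged into one kernel-verified Lean document; each statement's English description precedes it below -/
import Mathlib

section
/- Let G = (I⁰, I¹; F; w) be an instance in which every vertex has at least one neighbor and I¹ is nonempty. Let α be a locally maximin refinement of the side-0 vertex weights, inducing the payload density vector ρ on I¹, and let S = {j ∈ I¹ : ρ(j) = max_{k∈I¹} ρ(k)}. Then S is the maximal densest subset of I¹ with ground set I¹: S is a densest subset, every densest subset of I¹ is contained in S, and the density w(F[S])/w(S) of S equals max_{k∈I¹} ρ(k). -/
open Finset

variable {V : Type*} [DecidableEq V]

/-- `(I0, I1; F; w)` is a valid input instance: the vertex sets `I0`, `I1` are disjoint,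
every edge has its first endpoint in `I0` and second endpoint in `I1`,
and vertex weights are positive. -/
def IsInstance (I0 I1 : Finset V) (F : Finset (V × V)) (w : V → ℝ) : Prop :=
  Disjoint I0 I1 ∧ (∀ e ∈ F, e.1 ∈ I0 ∧ e.2 ∈ I1) ∧ (∀ v ∈ I0 ∪ I1, 0 < w v)

/-- Payload received by a side-0 vertex `i` from edge weights `a`
(the sum of `a` over edges incident to `i`). -/
noncomputable def payload0 (F : Finset (V × V)) (a : V × V → ℝ) (i : V) : ℝ :=
  ∑ e ∈ F.filter (fun e => e.1 = i), a e

/-- Payload received by a side-1 vertex `j` from edge weights `a`. -/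
noncomputable def payload1 (F : Finset (V × V)) (a : V × V → ℝ) (j : V) : ℝ :=
  ∑ e ∈ F.filter (fun e => e.2 = j), a e

/-- `a` is a refinement of the side-0 vertex weights. -/
def IsRefinement0 (I0 : Finset V) (F : Finset (V × V)) (w : V → ℝ) (a : V × V → ℝ) : Prop :=
  (∀ e, 0 ≤ a e) ∧ (∀ e, e ∉ F → a e = 0) ∧
    ∀ i ∈ I0, (∃ j, (i, j) ∈ F) → payload0 F a i = w i

/-- `a` is a refinement of the side-1 vertex weights. -/
def IsRefinement1 (I1 : Finset V) (F : Finset (V × V)) (w : V → ℝ) (a : V × V → ℝ) : Prop :=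
  (∀ e, 0 ≤ a e) ∧ (∀ e, e ∉ F → a e = 0) ∧
    ∀ j ∈ I1, (∃ i, (i, j) ∈ F) → payload1 F a j = w j

/-- Payload density at a side-0 vertex. -/
noncomputable def density0 (F : Finset (V × V)) (w : V → ℝ) (a : V × V → ℝ) (i : V) : ℝ :=
  payload0 F a i / w i

/-- Payload density at a side-1 vertex. -/
noncomputable def density1 (F : Finset (V × V)) (w : V → ℝ) (a : V × V → ℝ) (j : V) : ℝ :=
  payload1 F a j / w j

/-- A side-0 refinement is locally maximin: positive weight is sent only to neighbours
of minimum payload density. -/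
def LocallyMaximin0 (F : Finset (V × V)) (w : V → ℝ) (a : V × V → ℝ) : Prop :=
  ∀ e ∈ F, 0 < a e → ∀ k, (e.1, k) ∈ F → density1 F w a e.2 ≤ density1 F w a k

/-- A side-1 refinement is locally maximin. -/
def LocallyMaximin1 (F : Finset (V × V)) (w : V → ℝ) (a : V × V → ℝ) : Prop :=
  ∀ e ∈ F, 0 < a e → ∀ k, (k, e.2) ∈ F → density0 F w a e.1 ≤ density0 F w a k

/-- `b` is the proportional response to the side-0 refinement `a`. -/
def IsPropRespOf0 (F : Finset (V × V)) (w : V → ℝ) (a b : V × V → ℝ) : Prop :=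
  (∀ e, e ∉ F → b e = 0) ∧ ∀ e ∈ F, b e = a e * w e.2 / payload1 F a e.2

/-- `a` is the proportional response to the side-1 refinement `b`. -/
def IsPropRespOf1 (F : Finset (V × V)) (w : V → ℝ) (b a : V × V → ℝ) : Prop :=
  (∀ e, e ∉ F → a e = 0) ∧ ∀ e ∈ F, a e = b e * w e.1 / payload0 F b e.1

variable [Fintype V]

/-- Total weight of a vertex set. -/
noncomputable def wsum (w : V → ℝ) (S : Finset V) : ℝ := ∑ v ∈ S, w v

/-- With `I1` as ground set, the closed neighbourhood `F[S]` of `S ⊆ I1`: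
side-0 vertices having at least one neighbour, all of whose neighbours lie in `S`. -/
def closedNbr1 (I0 : Finset V) (F : Finset (V × V)) (S : Finset V) : Finset V :=
  I0.filter fun i => (∃ j, (i, j) ∈ F) ∧ ∀ j, (i, j) ∈ F → j ∈ S

/-- Density `ρ(S) = w(F[S]) / w(S)` of a subset of the ground set `I1`. -/
noncomputable def subsetDensity1 (I0 : Finset V) (F : Finset (V × V)) (w : V → ℝ)
    (S : Finset V) : ℝ :=
  wsum w (closedNbr1 I0 F S) / wsum w S

lemma sum_payload0_eq (F : Finset (V × V)) (a : V × V → ℝ) (A : Finset V) :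
    ∑ i ∈ A, payload0 F a i = ∑ e ∈ F.filter (fun e => e.1 ∈ A), a e := by
  unfold payload0
  rw [Finset.sum_filter]
  simp_rw [Finset.sum_filter]
  rw [Finset.sum_comm]
  refine Finset.sum_congr rfl fun e _ => ?_
  rw [Finset.sum_ite_eq A e.1 (fun _ => a e)]

lemma sum_payload1_eq (F : Finset (V × V)) (a : V × V → ℝ) (A : Finset V) :
    ∑ j ∈ A, payload1 F a j = ∑ e ∈ F.filter (fun e => e.2 ∈ A), a e := by
  unfold payload1
  rw [Finset.sum_filter]
  simp_rw [Finset.sum_filter]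
  rw [Finset.sum_comm]
  refine Finset.sum_congr rfl fun e _ => ?_
  rw [Finset.sum_ite_eq A e.2 (fun _ => a e)]

/-- **The maximin condition recovers the maximal densest subset.**
Suppose every vertex has at least one neighbour, `I1` is nonempty, and `a` is a locally
maximin refinement of the side-0 weights inducing payload densities `ρ` on `I1`.  Then
`S = {j ∈ I1 : ρ(j) = max_k ρ(k)}` is the maximal densest subset of `I1`: its density
equals `max_k ρ(k)`, it is densest, and every densest subset is contained in it. -/
theorem maximin_recovers_maximal_densest_subset
    (I0 I1 : Finset V) (F : Finset (V × V)) (w : V → ℝ)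
    (hG : IsInstance I0 I1 F w)
    (hnb0 : ∀ i ∈ I0, ∃ j, (i, j) ∈ F) (hnb1 : ∀ j ∈ I1, ∃ i, (i, j) ∈ F)
    (hI1 : I1.Nonempty)
    (a : V × V → ℝ)
    (ha : IsRefinement0 I0 F w a) (hm : LocallyMaximin0 F w a) :
    subsetDensity1 I0 F w (I1.filter fun j =>
        density1 F w a j = I1.sup' hI1 (density1 F w a)) =
      I1.sup' hI1 (density1 F w a) ∧
    (∀ T ⊆ I1, T.Nonempty →
      subsetDensity1 I0 F w T ≤
        subsetDensity1 I0 F w (I1.filter fun j =>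
          density1 F w a j = I1.sup' hI1 (density1 F w a))) ∧
    (∀ T ⊆ I1, T.Nonempty →
      subsetDensity1 I0 F w T =
        subsetDensity1 I0 F w (I1.filter fun j =>
          density1 F w a j = I1.sup' hI1 (density1 F w a)) →
      T ⊆ I1.filter fun j => density1 F w a j = I1.sup' hI1 (density1 F w a)) := by
  obtain ⟨hdisj, hF, hw⟩ := hG
  obtain ⟨hann, ha0, haref⟩ := ha
  set ρ : V → ℝ := density1 F w a with hρ
  set M : ℝ := I1.sup' hI1 ρ with hM
  set S : Finset V := I1.filter (fun j => ρ j = M) with hS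
  have hwpos1 : ∀ j ∈ I1, 0 < w j := fun j hj => hw j (Finset.mem_union_right _ hj)
  have hle : ∀ j ∈ I1, ρ j ≤ M := fun j hj => Finset.le_sup' ρ hj
  have hSne : S.Nonempty := by
    obtain ⟨j, hj, hje⟩ := Finset.exists_mem_eq_sup' hI1 ρ
    exact ⟨j, Finset.mem_filter.mpr ⟨hj, hje.symm⟩⟩
  have hSsub : S ⊆ I1 := Finset.filter_subset _ _
  have hpay1 : ∀ j ∈ I1, payload1 F a j = ρ j * w j := by
    intro j hj
    have hwj := (hwpos1 j hj).ne'
    rw [hρ]; unfold density1; field_simp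
  -- weight of closed neighbourhood as a sum of payloads
  have hcn : ∀ T : Finset V,
      wsum w (closedNbr1 I0 F T) = ∑ e ∈ F.filter (fun e => e.1 ∈ closedNbr1 I0 F T), a e := by
    intro T
    rw [← sum_payload0_eq]
    unfold wsum
    refine Finset.sum_congr rfl fun i hi => ?_
    rw [closedNbr1, Finset.mem_filter] at hi
    exact (haref i hi.1 hi.2.1).symm
  -- key inequality for arbitrary T
  have key_le : ∀ T : Finset V, wsum w (closedNbr1 I0 F T) ≤ ∑ j ∈ T, payload1 F a j := by
    intro T
    rw [hcn, sum_payload1_eq]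
    refine Finset.sum_le_sum_of_subset_of_nonneg ?_ (fun e _ _ => hann e)
    intro e he
    rw [Finset.mem_filter] at he ⊢
    refine ⟨he.1, ?_⟩
    have hi := he.2
    rw [closedNbr1, Finset.mem_filter] at hi
    exact hi.2.2 e.2 (by rw [Prod.mk.eta]; exact he.1)
  -- key equality for S
  have key_eq : wsum w (closedNbr1 I0 F S) = ∑ j ∈ S, payload1 F a j := by
    rw [hcn, sum_payload1_eq]
    refine Finset.sum_subset ?_ ?_
    · intro e he
      rw [Finset.mem_filter] at he ⊢
      refine ⟨he.1, ?_⟩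
      have hi := he.2
      rw [closedNbr1, Finset.mem_filter] at hi
      exact hi.2.2 e.2 (by rw [Prod.mk.eta]; exact he.1)
    · intro e he hne
      by_contra hne0
      have hpos : 0 < a e := lt_of_le_of_ne (hann e) (Ne.symm hne0)
      rw [Finset.mem_filter] at he
      have hmm := hm e he.1 hpos
      have hρe2 : ρ e.2 = M := (Finset.mem_filter.mp he.2).2
      apply hne
      rw [Finset.mem_filter]
      refine ⟨he.1, ?_⟩
      rw [closedNbr1, Finset.mem_filter]
      refine ⟨(hF e he.1).1, ⟨e.2, by rw [Prod.mk.eta]; exact he.1⟩, fun k hk => ?_⟩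
      have hk1 : k ∈ I1 := (hF _ hk).2
      have h1 : M ≤ ρ k := hρe2 ▸ hmm k hk
      exact Finset.mem_filter.mpr ⟨hk1, le_antisymm (hle k hk1) h1⟩
  have hwT : ∀ T ⊆ I1, T.Nonempty → 0 < wsum w T := by
    intro T hT ⟨t, ht⟩
    exact Finset.sum_pos' (fun j hj => (hwpos1 j (hT hj)).le) ⟨t, ht, hwpos1 t (hT ht)⟩
  have hwS : 0 < wsum w S := hwT S hSsub hSne
  -- density of S equals M
  have hSdens : subsetDensity1 I0 F w S = M := by
    have : wsum w (closedNbr1 I0 F S) = M * wsum w S := by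
      rw [key_eq]
      unfold wsum
      rw [Finset.mul_sum]
      refine Finset.sum_congr rfl fun j hj => ?_
      rw [hpay1 j (hSsub hj), (Finset.mem_filter.mp hj).2]
    rw [subsetDensity1, this, mul_div_assoc, div_self hwS.ne', mul_one]
  -- payload sum bound for arbitrary T ⊆ I1
  have hpsum : ∀ T ⊆ I1, ∑ j ∈ T, payload1 F a j ≤ M * wsum w T := by
    intro T hT
    unfold wsum
    rw [Finset.mul_sum]
    refine Finset.sum_le_sum fun j hj => ?_
    rw [hpay1 j (hT hj)]
    exact mul_le_mul_of_nonneg_right (hle j (hT hj)) (hwpos1 j (hT hj)).le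
  refine ⟨hSdens, ?_, ?_⟩
  · intro T hT hTne
    rw [hSdens, subsetDensity1, div_le_iff₀ (hwT T hT hTne)]
    exact (key_le T).trans (hpsum T hT)
  · intro T hT hTne heq
    rw [hSdens] at heq
    have hwTpos := hwT T hT hTne
    have hFT : wsum w (closedNbr1 I0 F T) = M * wsum w T := by
      rw [subsetDensity1, div_eq_iff hwTpos.ne'] at heq
      rw [heq, mul_comm]
    have hchain : M * wsum w T ≤ ∑ j ∈ T, payload1 F a j := hFT ▸ key_le T
    have hsum_eq : ∑ j ∈ T, payload1 F a j = M * wsum w T :=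
      le_antisymm (hpsum T hT) hchain
    have hzero : ∑ j ∈ T, (M * w j - payload1 F a j) = 0 := by
      rw [Finset.sum_sub_distrib, hsum_eq, ← Finset.mul_sum]
      simp [wsum]
    have hterm : ∀ j ∈ T, M * w j - payload1 F a j = 0 := by
      refine (Finset.sum_eq_zero_iff_of_nonneg fun j hj => ?_).mp hzero
      rw [hpay1 j (hT hj), sub_nonneg]
      exact mul_le_mul_of_nonneg_right (hle j (hT hj)) (hwpos1 j (hT hj)).le
    intro j hj
    have hj1 := hT hj
    have h := hterm j hj
    rw [hpay1 j hj1, sub_eq_zero] at h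
    have : ρ j = M := by
      have hwj := (hwpos1 j hj1).ne'
      field_simp at h
      linarith
    exact Finset.mem_filter.mpr ⟨hj1, this⟩
end

section
/- For every instance G = (I⁰, I¹; F; w) there exists a refinement α of the vertex weights on side 0 that is locally maximin. -/
open Finset

variable {V : Type*} [DecidableEq V]

/-- **Existence of a locally maximin refinement.**
Every instance admits a refinement of the side-0 vertex weights that is locally maximin. -/
theorem exists_locally_maximin_refinement
    (I0 I1 : Finset V) (F : Finset (V × V)) (w : V → ℝ)
    (hG : IsInstance I0 I1 F w) :
    ∃ a : V × V → ℝ, IsRefinement0 I0 F w a ∧ LocallyMaximin0 F w a := by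
  classical
  obtain ⟨hdisj, hF, hw⟩ := hG
  set S : Set (V × V → ℝ) := {a | IsRefinement0 I0 F w a} with hSdef
  -- S is nonempty: split each weight equally among neighbours
  have hSne : S.Nonempty := by
    refine ⟨fun e => if e ∈ F then w e.1 / ((F.filter (fun e' => e'.1 = e.1)).card : ℝ) else 0,
      ?_, ?_, ?_⟩
    · intro e
      by_cases he : e ∈ F
      · simp only [he, if_true]
        exact div_nonneg (le_of_lt (hw _ (mem_union_left _ (hF e he).1))) (Nat.cast_nonneg _)
      · simp [he]
    · intro e he; simp [he]
    · intro i hi hex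
      obtain ⟨j0, hj0⟩ := hex
      have hmem : (i, j0) ∈ F.filter (fun e' => e'.1 = i) := mem_filter.mpr ⟨hj0, rfl⟩
      have hdeg : 0 < ((F.filter (fun e' => e'.1 = i)).card : ℝ) := by
        exact_mod_cast Finset.card_pos.mpr ⟨(i, j0), hmem⟩
      have hcongr : ∀ e ∈ F.filter (fun e' => e'.1 = i),
          (if e ∈ F then w e.1 / ((F.filter (fun e' => e'.1 = e.1)).card : ℝ) else 0)
            = w i / ((F.filter (fun e' => e'.1 = i)).card : ℝ) := by
        intro e he
        rw [mem_filter] at he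
        simp [he.1, he.2]
      rw [payload0, Finset.sum_congr rfl hcongr, Finset.sum_const, nsmul_eq_mul]
      field_simp
  -- S is compact
  have hScomp : IsCompact S := by
    have hpi : IsCompact (Set.pi Set.univ
        (fun e : V × V => if e ∈ F then Set.Icc (0:ℝ) (w e.1) else {0})) := by
      refine isCompact_univ_pi fun e => ?_
      by_cases he : e ∈ F
      · simp only [he, if_true]; exact isCompact_Icc
      · simp only [he, if_false]; exact isCompact_singleton
    have hsub : S ⊆ Set.pi Set.univ
        (fun e : V × V => if e ∈ F then Set.Icc (0:ℝ) (w e.1) else {0}) := by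
      rintro a ⟨h0, hz, hp⟩ e _
      by_cases he : e ∈ F
      · simp only [he, if_true, Set.mem_Icc]
        refine ⟨h0 e, ?_⟩
        have h1 : payload0 F a e.1 = w e.1 :=
          hp e.1 (hF e he).1 ⟨e.2, by simpa using he⟩
        calc a e ≤ payload0 F a e.1 :=
              Finset.single_le_sum (fun x _ => h0 x) (mem_filter.mpr ⟨he, rfl⟩)
          _ = w e.1 := h1
      · simp [he, hz e he]
    have hclosed : IsClosed S := by
      have hEq : S = {a : V × V → ℝ | ∀ e, 0 ≤ a e} ∩
          ({a | ∀ e, e ∉ F → a e = 0} ∩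
            {a | ∀ i ∈ I0, (∃ j, (i, j) ∈ F) → payload0 F a i = w i}) := by
        ext a
        simp [hSdef, IsRefinement0, Set.mem_inter_iff, Set.mem_setOf_eq]
      rw [hEq]
      refine IsClosed.inter ?_ (IsClosed.inter ?_ ?_)
      · rw [Set.setOf_forall]
        exact isClosed_iInter fun e => isClosed_le continuous_const (continuous_apply e)
      · rw [Set.setOf_forall]
        refine isClosed_iInter fun e => ?_
        by_cases he : e ∈ F
        · have : {a : V × V → ℝ | e ∉ F → a e = 0} = Set.univ := by
            ext a; simp [he]
          rw [this]; exact isClosed_univ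
        · have : {a : V × V → ℝ | e ∉ F → a e = 0} = {a | a e = 0} := by
            ext a; simp [he]
          rw [this]; exact isClosed_eq (continuous_apply e) continuous_const
      · rw [Set.setOf_forall]
        refine isClosed_iInter fun i => ?_
        by_cases hi : i ∈ I0
        · by_cases hex : ∃ j, (i, j) ∈ F
          · have : {a : V × V → ℝ | i ∈ I0 → (∃ j, (i, j) ∈ F) → payload0 F a i = w i}
                = {a | payload0 F a i = w i} := by
              ext a; simp [hi, hex]
            rw [this]
            exact isClosed_eq (continuous_finset_sum _ fun e _ => continuous_apply e)
              continuous_const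
          · have : {a : V × V → ℝ | i ∈ I0 → (∃ j, (i, j) ∈ F) → payload0 F a i = w i}
                = Set.univ := by
              ext a; simp [hex]
            rw [this]; exact isClosed_univ
        · have : {a : V × V → ℝ | i ∈ I0 → (∃ j, (i, j) ∈ F) → payload0 F a i = w i}
              = Set.univ := by
            ext a; simp [hi]
          rw [this]; exact isClosed_univ
    exact hpi.of_isClosed_subset hclosed hsub
  -- the potential function
  set J : Finset V := F.image Prod.snd with hJ
  set Ψ : (V × V → ℝ) → ℝ :=
    fun a => ∑ j ∈ J, Real.sqrt (w j * payload1 F a j) with hΨ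
  have hΨc : Continuous Ψ := by
    refine continuous_finset_sum _ fun j _ => ?_
    exact Real.continuous_sqrt.comp
      (continuous_const.mul (continuous_finset_sum _ fun e _ => continuous_apply e))
  obtain ⟨a, haS, hmax⟩ := hScomp.exists_isMaxOn hSne hΨc.continuousOn
  obtain ⟨ha0, haF, hap⟩ := haS
  refine ⟨a, ⟨ha0, haF, hap⟩, ?_⟩
  intro e he hae k hk
  obtain ⟨i, j⟩ := e
  show density1 F w a j ≤ density1 F w a k
  by_contra hcon
  push_neg at hcon
  have hkF : (i, k) ∈ F := hk
  have hae : 0 < a (i, j) := hae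
  have he : (i, j) ∈ F := he
  have hjk : k ≠ j := by
    rintro rfl; exact absurd hcon (lt_irrefl _)
  have hne : ((i, j) : V × V) ≠ (i, k) := by
    simp only [ne_eq, Prod.mk.injEq, true_and]
    exact fun h => hjk h.symm
  have hwj : 0 < w j := hw j (mem_union_right _ (hF _ he).2)
  have hwk : 0 < w k := hw k (mem_union_right _ (hF _ hkF).2)
  set pj : ℝ := payload1 F a j with hpjdef
  set pk : ℝ := payload1 F a k with hpkdef
  have haepj : a (i, j) ≤ pj :=
    Finset.single_le_sum (f := fun e => a e) (fun x _ => ha0 x) (mem_filter.mpr ⟨he, rfl⟩)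
  have hpj_pos : 0 < pj := lt_of_lt_of_le hae haepj
  have hpk0 : 0 ≤ pk := Finset.sum_nonneg fun x _ => ha0 x
  have hlt' : pk / w k < pj / w j := hcon
  have hwm : pk * w j < pj * w k := (div_lt_div_iff₀ hwk hwj).mp hlt'
  set φ : ℝ → ℝ := fun s =>
    Real.sqrt (w k) * (Real.sqrt pj + Real.sqrt (pj - s))
      - Real.sqrt (w j) * (Real.sqrt (pk + s) + Real.sqrt pk) with hφdef
  have hφ0 : 0 < φ 0 := by
    have h1 : Real.sqrt (w j * pk) < Real.sqrt (w k * pj) :=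
      Real.sqrt_lt_sqrt (by positivity) (by nlinarith)
    rw [Real.sqrt_mul hwj.le, Real.sqrt_mul hwk.le] at h1
    have hexp : φ 0 = 2 * (Real.sqrt (w k) * Real.sqrt pj - Real.sqrt (w j) * Real.sqrt pk) := by
      simp only [hφdef, sub_zero, add_zero]
      ring
    rw [hexp]
    linarith
  have hφc : Continuous φ := by
    refine Continuous.sub ?_ ?_
    · exact continuous_const.mul (continuous_const.add
        (Real.continuous_sqrt.comp (continuous_const.sub continuous_id)))
    · exact continuous_const.mul ((Real.continuous_sqrt.comp
        (continuous_const.add continuous_id)).add continuous_const)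
  have hev : ∀ᶠ s in nhds (0:ℝ), 0 < φ s :=
    (hφc.continuousAt (x := 0)).eventually (eventually_gt_nhds hφ0)
  obtain ⟨δ, hδ, hδφ⟩ := Metric.eventually_nhds_iff.mp hev
  set t : ℝ := min (δ / 2) (a (i, j)) with htdef
  have ht0 : 0 < t := lt_min (by linarith) hae
  have htae : t ≤ a (i, j) := min_le_right _ _
  have hφt : 0 < φ t := by
    refine hδφ ?_
    rw [Real.dist_eq, sub_zero, abs_of_pos ht0]
    calc t ≤ δ / 2 := min_le_left _ _
      _ < δ := by linarith
  have hpjt : 0 ≤ pj - t := by linarith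
  -- the perturbed refinement
  set a' : V × V → ℝ := fun e' =>
    a e' + (if e' = (i, j) then -t else 0) + (if e' = (i, k) then t else 0) with ha'def
  have hsum : ∀ s : Finset (V × V), ∑ e' ∈ s, a' e' =
      (∑ e' ∈ s, a e') + (if (i, j) ∈ s then -t else 0) + (if (i, k) ∈ s then t else 0) := by
    intro s
    simp only [ha'def]
    rw [Finset.sum_add_distrib, Finset.sum_add_distrib,
      Finset.sum_ite_eq' s (i, j) (fun _ => -t), Finset.sum_ite_eq' s (i, k) (fun _ => t)]
  have hp0 : ∀ i', payload0 F a' i' = payload0 F a i' := by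
    intro i'
    rw [payload0, payload0, hsum]
    by_cases hii : i = i'
    · subst hii
      rw [if_pos (by simp [Finset.mem_filter, he]), if_pos (by simp [Finset.mem_filter, hkF])]
      ring
    · rw [if_neg (by simp [mem_filter, hii]), if_neg (by simp [mem_filter, hii])]
      ring
  have hp1j : payload1 F a' j = pj - t := by
    rw [payload1, hsum]
    rw [if_pos (by simp [Finset.mem_filter, he]),
      if_neg (by simp only [Finset.mem_filter]; exact fun h => hjk h.2)]
    rw [hpjdef, payload1]
    ring
  have hp1k : payload1 F a' k = pk + t := by
    rw [payload1, hsum]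
    rw [if_neg (by simp only [Finset.mem_filter]; exact fun h => hjk h.2.symm),
      if_pos (by simp [Finset.mem_filter, hkF])]
    rw [hpkdef, payload1]
    ring
  have hp1o : ∀ j', j' ≠ j → j' ≠ k → payload1 F a' j' = payload1 F a j' := by
    intro j' h1 h2
    rw [payload1, payload1, hsum]
    rw [if_neg (by simp only [mem_filter]; exact fun h => h1 h.2.symm),
      if_neg (by simp only [mem_filter]; exact fun h => h2 h.2.symm)]
    ring
  have ha'S : a' ∈ S := by
    refine ⟨?_, ?_, ?_⟩
    · intro e'
      simp only [ha'def]
      by_cases h1 : e' = (i, j)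
      · subst h1
        rw [if_pos rfl, if_neg hne]
        linarith
      · rw [if_neg h1]
        by_cases h2 : e' = (i, k)
        · rw [if_pos h2]
          have := ha0 e'
          linarith
        · rw [if_neg h2]
          have := ha0 e'
          linarith
    · intro e' he'
      have h1 : e' ≠ (i, j) := fun h => he' (h ▸ he)
      have h2 : e' ≠ (i, k) := fun h => he' (h ▸ hkF)
      simp [ha'def, h1, h2, haF e' he']
    · intro i' hi' hex
      rw [hp0]
      exact hap i' hi' hex
  -- compare potentials
  have hjJ : j ∈ J := Finset.mem_image.mpr ⟨(i, j), he, rfl⟩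
  have hkJ : k ∈ J := Finset.mem_image.mpr ⟨(i, k), hkF, rfl⟩
  set A : ℝ := Real.sqrt pj with hA
  set B : ℝ := Real.sqrt (pj - t) with hB
  set C : ℝ := Real.sqrt pk with hC
  set D : ℝ := Real.sqrt (pk + t) with hD
  set u : ℝ := Real.sqrt (w j) with hu
  set v : ℝ := Real.sqrt (w k) with hv
  have hAB : (A - B) * (A + B) = t := by
    have h1 : A * A = pj := Real.mul_self_sqrt hpj_pos.le
    have h2 : B * B = pj - t := Real.mul_self_sqrt hpjt
    calc (A - B) * (A + B) = A * A - B * B := by ring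
      _ = pj - (pj - t) := by rw [h1, h2]
      _ = t := by ring
  have hDC : (D - C) * (D + C) = t := by
    have h1 : D * D = pk + t := Real.mul_self_sqrt (by linarith)
    have h2 : C * C = pk := Real.mul_self_sqrt hpk0
    calc (D - C) * (D + C) = D * D - C * C := by ring
      _ = pk + t - pk := by rw [h1, h2]
      _ = t := by ring
  have hABpos : 0 < A + B := by
    have hA' : 0 < A := Real.sqrt_pos.mpr hpj_pos
    have hB' : 0 ≤ B := Real.sqrt_nonneg _
    linarith
  have hDCpos : 0 < D + C := by
    have hD' : 0 < D := Real.sqrt_pos.mpr (by linarith)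
    have hC' : 0 ≤ C := Real.sqrt_nonneg _
    linarith
  have hvu : u * (D + C) < v * (A + B) := by
    have hthis := hφt
    simp only [hφdef] at hthis
    rw [show Real.sqrt (pj - t) = B from hB.symm,
      show Real.sqrt (pk + t) = D from hD.symm] at hthis
    linarith
  have key : u * (A - B) < v * (D - C) := by
    have h1 : u * (A - B) * ((A + B) * (D + C)) = u * t * (D + C) := by
      calc u * (A - B) * ((A + B) * (D + C)) = u * ((A - B) * (A + B)) * (D + C) := by ring
        _ = u * t * (D + C) := by rw [hAB]
    have h2 : v * (D - C) * ((A + B) * (D + C)) = v * t * (A + B) := by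
      calc v * (D - C) * ((A + B) * (D + C)) = v * ((D - C) * (D + C)) * (A + B) := by ring
        _ = v * t * (A + B) := by rw [hDC]
    have h3' := mul_lt_mul_of_pos_left hvu ht0
    have h3 : u * t * (D + C) < v * t * (A + B) := by
      rw [show u * t * (D + C) = t * (u * (D + C)) by ring,
        show v * t * (A + B) = t * (v * (A + B)) by ring]
      exact h3'
    have h4 : 0 < (A + B) * (D + C) := mul_pos hABpos hDCpos
    have h5 : u * (A - B) * ((A + B) * (D + C)) < v * (D - C) * ((A + B) * (D + C)) := by
      rw [h1, h2]; exact h3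
    exact lt_of_mul_lt_mul_right h5 h4.le
  have hΨlt : Ψ a < Ψ a' := by
    have hdiff : Ψ a' - Ψ a = ∑ j' ∈ J,
        (Real.sqrt (w j' * payload1 F a' j') - Real.sqrt (w j' * payload1 F a j')) := by
      rw [hΨ, ← Finset.sum_sub_distrib]
    have hvanish : ∀ x ∈ J, x ∉ ({j, k} : Finset V) →
        Real.sqrt (w x * payload1 F a' x) - Real.sqrt (w x * payload1 F a x) = 0 := by
      intro x _ hx
      simp only [Finset.mem_insert, Finset.mem_singleton, not_or] at hx
      rw [hp1o x hx.1 hx.2, sub_self]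
    have hpairsub : ({j, k} : Finset V) ⊆ J := by
      intro x hx
      simp only [Finset.mem_insert, Finset.mem_singleton] at hx
      rcases hx with rfl | rfl
      · exact hjJ
      · exact hkJ
    have hpair : ∑ j' ∈ J,
        (Real.sqrt (w j' * payload1 F a' j') - Real.sqrt (w j' * payload1 F a j'))
        = (Real.sqrt (w j * (pj - t)) - Real.sqrt (w j * pj))
          + (Real.sqrt (w k * (pk + t)) - Real.sqrt (w k * pk)) := by
      rw [← Finset.sum_subset hpairsub hvanish]
      rw [Finset.sum_pair (Ne.symm hjk)]
      rw [hp1j, hp1k, ← hpjdef, ← hpkdef]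
    have hsqr : Real.sqrt (w j * (pj - t)) = u * B := by
      rw [Real.sqrt_mul hwj.le, ← hu, ← hB]
    have hsqr2 : Real.sqrt (w j * pj) = u * A := by
      rw [Real.sqrt_mul hwj.le, ← hu, ← hA]
    have hsqr3 : Real.sqrt (w k * (pk + t)) = v * D := by
      rw [Real.sqrt_mul hwk.le, ← hv, ← hD]
    have hsqr4 : Real.sqrt (w k * pk) = v * C := by
      rw [Real.sqrt_mul hwk.le, ← hv, ← hC]
    have hfin : 0 < (Real.sqrt (w j * (pj - t)) - Real.sqrt (w j * pj))
        + (Real.sqrt (w k * (pk + t)) - Real.sqrt (w k * pk)) := by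
      rw [hsqr, hsqr2, hsqr3, hsqr4]
      have e1 : u * (A - B) = u * A - u * B := by ring
      have e2 : v * (D - C) = v * D - v * C := by ring
      linarith [key, e1, e2]
    linarith [hdiff, hpair, hfin]
  exact absurd (hmax ha'S) (not_le.mpr hΨlt)
end

section
/- Let G = (I⁰, I¹; F; w) be an instance and let α⁰ be a locally maximin refinement of the side-0 vertex weights (so every vertex of I¹ having at least one neighbor receives positive payload, and the proportional response α¹ of α⁰ is the unique refinement of the side-1 weights with α¹(ij) = α⁰(ij)·w(j)/p¹(j)). Let ρ¹ be the payload density vector on I¹ induced by α⁰ and ρ⁰ the payload density vector on I⁰ induced by α¹. Then: (1) for every edge {i,j} ∈ F with i ∈ I⁰, j ∈ I¹ and α⁰(ij) > 0, one has ρ⁰(i)·ρ¹(j) = 1; (2) the refinement α¹ is locally maximin; and (3) the proportional response of α¹ equals α⁰. -/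
open Finset

variable {V : Type*} [DecidableEq V]

/-- **Proportional response to a locally maximin refinement.**
Let `a0` be a locally maximin refinement of the side-0 weights.  Then every side-1 vertex
with at least one neighbour receives positive payload, so the proportional response of `a0`
is the unique `a1` with `a1(ij) = a0(ij)·w(j)/p¹(j)` on `F`; it is a refinement of the
side-1 weights, and:
(1) on every edge of positive weight, `ρ⁰(i)·ρ¹(j) = 1`;
(2) `a1` is locally maximin; and
(3) the proportional response of `a1` is `a0`. -/
theorem prop_resp_of_locally_maximin
    (I0 I1 : Finset V) (F : Finset (V × V)) (w : V → ℝ)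
    (hG : IsInstance I0 I1 F w)
    (a0 : V × V → ℝ)
    (ha0 : IsRefinement0 I0 F w a0) (hm0 : LocallyMaximin0 F w a0) :
    (∀ j ∈ I1, (∃ i, (i, j) ∈ F) → 0 < payload1 F a0 j) ∧
    ∀ a1 : V × V → ℝ, IsPropRespOf0 F w a0 a1 →
      IsRefinement1 I1 F w a1 ∧
      (∀ e ∈ F, 0 < a0 e → density0 F w a1 e.1 * density1 F w a0 e.2 = 1) ∧
      LocallyMaximin1 F w a1 ∧
      IsPropRespOf1 F w a1 a0 := by
  obtain ⟨hdisj, hF, hw⟩ := hG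
  obtain ⟨ha0nn, ha0z, ha0sum⟩ := ha0
  have hw1 : ∀ e ∈ F, 0 < w e.1 := fun e he => hw _ (mem_union_left _ (hF e he).1)
  have hw2 : ∀ e ∈ F, 0 < w e.2 := fun e he => hw _ (mem_union_right _ (hF e he).2)
  -- every edge endpoint on side 1 has positive density
  have hd1 : ∀ e ∈ F, 0 < density1 F w a0 e.2 := by
    intro e he
    have hsum : payload0 F a0 e.1 = w e.1 := ha0sum _ (hF e he).1 ⟨e.2, he⟩
    have hpos : 0 < payload0 F a0 e.1 := hsum ▸ hw1 e he
    obtain ⟨x, hx, hax⟩ : ∃ x ∈ F.filter (fun x => x.1 = e.1), 0 < a0 x := by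
      by_contra h
      push_neg at h
      have : payload0 F a0 e.1 = 0 := by
        unfold payload0
        exact Finset.sum_eq_zero fun x hx => le_antisymm (h x hx) (ha0nn x)
      linarith
    rw [Finset.mem_filter] at hx
    obtain ⟨hxF, hx1⟩ := hx
    have hle : density1 F w a0 x.2 ≤ density1 F w a0 e.2 := by
      refine hm0 x hxF hax e.2 ?_
      rw [hx1]; exact he
    have hpx : 0 < payload1 F a0 x.2 := by
      have hmem : x ∈ F.filter (fun y => y.2 = x.2) := Finset.mem_filter.2 ⟨hxF, rfl⟩
      have h1 : a0 x ≤ payload1 F a0 x.2 :=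
        Finset.single_le_sum (fun y _ => ha0nn y) hmem
      linarith
    have : 0 < density1 F w a0 x.2 := div_pos hpx (hw2 x hxF)
    linarith
  have hp1 : ∀ e ∈ F, 0 < payload1 F a0 e.2 := by
    intro e he
    have hd := hd1 e he
    have hwe := hw2 e he
    unfold density1 at hd
    have := mul_pos hd hwe
    rwa [div_mul_cancel₀ _ hwe.ne'] at this
  -- equal densities on positive edges out of the same vertex
  have heq : ∀ e ∈ F, 0 < a0 e → ∀ x ∈ F, x.1 = e.1 → 0 < a0 x →
      density1 F w a0 x.2 = density1 F w a0 e.2 := by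
    intro e he hae x hxF hx1 hax
    refine le_antisymm (hm0 x hxF hax e.2 (by rw [hx1]; exact he))
      (hm0 e he hae x.2 ?_)
    rw [← hx1]; exact hxF
  constructor
  · intro j hj ⟨i, hij⟩
    exact hp1 (i, j) hij
  intro a1 ⟨ha1z, ha1F⟩
  -- a1 is nonnegative
  have ha1nn : ∀ e, 0 ≤ a1 e := by
    intro e
    by_cases he : e ∈ F
    · rw [ha1F e he]
      exact div_nonneg (mul_nonneg (ha0nn e) (hw2 e he).le) (hp1 e he).le
    · rw [ha1z e he]
  -- key: payload of a1 at the tail of a positive edge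
  have hkey : ∀ e ∈ F, 0 < a0 e →
      payload0 F a1 e.1 * density1 F w a0 e.2 = w e.1 := by
    intro e he hae
    have hsum0 : payload0 F a0 e.1 = w e.1 := ha0sum _ (hF e he).1 ⟨e.2, he⟩
    rw [← hsum0]
    unfold payload0
    rw [Finset.sum_mul]
    refine Finset.sum_congr rfl ?_
    intro x hx
    rw [Finset.mem_filter] at hx
    obtain ⟨hxF, hx1⟩ := hx
    rcases (ha0nn x).lt_or_eq with haxpos | hax0
    · have hd : density1 F w a0 x.2 = density1 F w a0 e.2 :=
        heq e he hae x hxF hx1 haxpos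
      rw [ha1F x hxF, ← hd]
      unfold density1
      have hp := hp1 x hxF
      have hwx := hw2 x hxF
      field_simp
    · rw [ha1F x hxF, ← hax0]; simp
  -- consequence: density0 of a1 at tail of positive edge
  have hdens : ∀ e ∈ F, 0 < a0 e →
      density0 F w a1 e.1 * density1 F w a0 e.2 = 1 := by
    intro e he hae
    unfold density0
    have := hkey e he hae
    have hwe := hw1 e he
    field_simp
    linarith [hkey e he hae]
  -- a1 is a refinement of side-1 weights
  have href : IsRefinement1 I1 F w a1 := by
    refine ⟨ha1nn, ha1z, ?_⟩
    intro j hj ⟨i, hij⟩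
    unfold payload1
    have : ∀ x ∈ F.filter (fun y => y.2 = j), a1 x = a0 x * w j / payload1 F a0 j := by
      intro x hx
      rw [Finset.mem_filter] at hx
      obtain ⟨hxF, hx2⟩ := hx
      rw [ha1F x hxF, hx2]
    rw [Finset.sum_congr rfl this, ← Finset.sum_div, ← Finset.sum_mul]
    have hpj : 0 < payload1 F a0 j := hp1 (i, j) hij
    rw [show (∑ x ∈ F.filter (fun y => y.2 = j), a0 x) = payload1 F a0 j from rfl]
    field_simp
  refine ⟨href, hdens, ?_, ?_⟩
  · -- locally maximin
    intro e he hae1 k hk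
    have hae : 0 < a0 e := by
      rcases (ha0nn e).lt_or_eq with h | h
      · exact h
      · exfalso; rw [ha1F e he, ← h] at hae1; simp at hae1
    have h1 : density0 F w a1 e.1 * density1 F w a0 e.2 = 1 := hdens e he hae
    -- find a positive edge out of k
    have hkF : (k, e.2) ∈ F := hk
    have hsum : payload0 F a0 k = w k := ha0sum _ (hF _ hkF).1 ⟨e.2, hkF⟩
    have hpos : 0 < payload0 F a0 k := hsum ▸ hw1 _ hkF
    obtain ⟨x, hx, hax⟩ : ∃ x ∈ F.filter (fun x => x.1 = k), 0 < a0 x := by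
      by_contra h
      push_neg at h
      have : payload0 F a0 k = 0 := by
        unfold payload0
        exact Finset.sum_eq_zero fun x hx => le_antisymm (h x hx) (ha0nn x)
      linarith
    rw [Finset.mem_filter] at hx
    obtain ⟨hxF, hx1⟩ := hx
    have h2 : density0 F w a1 x.1 * density1 F w a0 x.2 = 1 := hdens x hxF hax
    rw [hx1] at h2
    have hle : density1 F w a0 x.2 ≤ density1 F w a0 e.2 :=
      hm0 x hxF hax e.2 (by rw [hx1]; exact hkF)
    have hdx : 0 < density1 F w a0 x.2 := hd1 x hxF
    have hde : 0 < density1 F w a0 e.2 := hd1 e he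
    have he1 : density0 F w a1 e.1 = 1 / density1 F w a0 e.2 := by
      field_simp at h1 ⊢
      linarith
    have he2 : density0 F w a1 k = 1 / density1 F w a0 x.2 := by
      field_simp at h2 ⊢
      linarith
    rw [he1, he2]
    exact one_div_le_one_div_of_le hdx hle
  · -- proportional response of a1 is a0
    refine ⟨ha0z, ?_⟩
    intro e he
    rcases (ha0nn e).lt_or_eq with hae | hae
    · have hk := hkey e he hae
      have hde : 0 < density1 F w a0 e.2 := hd1 e he
      have hwe1 := hw1 e he
      have hp0 : payload0 F a1 e.1 = w e.1 / density1 F w a0 e.2 := by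
        field_simp
        linarith
      rw [ha1F e he, hp0]
      have hpe := hp1 e he
      have hwe2 := hw2 e he
      unfold density1
      field_simp
    · rw [ha1F e he, ← hae]
      simp
end

section
/- Consider a bipartite Arrow-Debreu market on I = I⁰ ⊎ I¹ in which every agent has a mutually interested agent on the other side (for every i there exists j on the other side with w_i(j)·w_j(i) > 0). Let ι ∈ {0,1} and let x^ι be a side-ι allocation satisfying the local maximin condition at every agent of I^ι. Then every agent of I^ι̅ receives positive utility from x^ι, so the proportional response x^ι̅ of x^ι is unique; moreover: (1) the allocation x^ι̅ satisfies the local maximin condition at every agent of I^ι̅ (with utilities computed from the pair (x^ι, x^ι̅)); and (2) the proportional response of x^ι̅ equals x^ι. -/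
open Finset

/-- Extended-real ratio with the convention `a/0 = +∞`. -/
noncomputable def ratioInf (a b : ℝ) : EReal :=
  if b = 0 then ⊤ else ((a / b : ℝ) : EReal)

variable {A : Type*} [Fintype A]

/-- Utility of agent `k` under the allocation `x` (`x l k` is the fraction of good `l`
assigned to `k`), with valuations `w`. -/
noncomputable def util (w x : A → A → ℝ) (k : A) : ℝ := ∑ l, w k l * x l k

/-- `x` is a side-`ι` allocation: each agent of side `ι` completely distributes one unit
of its own good among the agents of the other side; all other entries vanish. -/
def SideAlloc (side : A → Bool) (ι : Bool) (x : A → A → ℝ) : Prop :=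
  (∀ i j, 0 ≤ x i j) ∧
  (∀ i, side i ≠ ι → ∀ j, x i j = 0) ∧
  (∀ i j, side j = ι → x i j = 0) ∧
  (∀ i, side i = ι → ∑ j, x i j = 1)

/-- The allocation `x` satisfies the local maximin condition at every agent of side `ι`:
`x i j > 0` only if `j` minimizes `u_k(x)/(w_k(i)·w_i(k))` over agents `k` of the other
side, with the convention `a/0 = +∞`. -/
def LocMaximin (side : A → Bool) (w : A → A → ℝ) (ι : Bool) (x : A → A → ℝ) : Prop :=
  ∀ i, side i = ι → ∀ j, 0 < x i j → ∀ k, side k ≠ ι →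
    ratioInf (util w x j) (w j i * w i j) ≤ ratioInf (util w x k) (w k i * w i k)

/-- `y` is the proportional response to the side-`ι` allocation `x`:
`y j i = w_j(i)·x_{i→j} / u_j(x)` for `j` of side `ι̅` and `i` of side `ι`. -/
def IsPRof (side : A → Bool) (w : A → A → ℝ) (ι : Bool) (x y : A → A → ℝ) : Prop :=
  (∀ j, side j = ι → ∀ i, y j i = 0) ∧
  (∀ j, side j ≠ ι → ∀ i, side i ≠ ι → y j i = 0) ∧
  (∀ j, side j ≠ ι → ∀ i, side i = ι → y j i = w j i * x i j / util w x j)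

/- ### Auxiliary lemmas -/

lemma ratioInf_le_top' (a b c : ℝ) : ratioInf a b ≤ ratioInf c 0 := by
  simp [ratioInf]

lemma ratioInf_le_ratioInf {a b c d : ℝ} (hb : b ≠ 0) (hd : d ≠ 0) (h : a / b ≤ c / d) :
    ratioInf a b ≤ ratioInf c d := by
  simp only [ratioInf, if_neg hb, if_neg hd]
  exact_mod_cast h

lemma of_ratioInf_le {a b c d : ℝ} (hd : d ≠ 0) (h : ratioInf a b ≤ ratioInf c d) :
    b ≠ 0 ∧ a / b ≤ c / d := by
  simp only [ratioInf, if_neg hd] at h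
  by_cases hb : b = 0
  · rw [if_pos hb] at h
    exact absurd h (not_le.mpr (EReal.coe_lt_top _))
  · rw [if_neg hb] at h
    exact ⟨hb, by exact_mod_cast h⟩

lemma bool_ne_iff {b c : Bool} : b ≠ c ↔ b = !c := by
  cases b <;> cases c <;> simp

/-- **Proportional response to a locally maximin allocation (bipartite Arrow-Debreu).**
In a bipartite Arrow-Debreu market in which every agent has a mutually interested agent on
the other side, let `x` be a side-`ι` allocation satisfying the local maximin condition at
every agent of side `ι`.  Then every agent of the other side receives positive utility from
`x` (so the proportional response of `x` is unique), and for the proportional response `y`: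
(1) `y` satisfies the local maximin condition at every agent of side `ι̅` (with utilities
computed from the combined pair), and (2) the proportional response of `y` is `x`. -/
theorem prop_resp_locally_maximin_bipartite_AD
    (side : A → Bool) (w : A → A → ℝ)
    (hw : ∀ i j, 0 ≤ w i j)
    (hbip : ∀ i j, side i = side j → w i j = 0)
    (hmut : ∀ i, ∃ j, side j ≠ side i ∧ 0 < w i j * w j i)
    (ι : Bool) (x : A → A → ℝ)
    (hx : SideAlloc side ι x)
    (hmax : LocMaximin side w ι x) :
    (∀ j, side j ≠ ι → 0 < util w x j) ∧
    (∃! y, IsPRof side w ι x y) ∧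
    ∀ y, IsPRof side w ι x y →
      SideAlloc side (!ι) y ∧
      LocMaximin side w (!ι) (fun l m => x l m + y l m) ∧
      IsPRof side w (!ι) y x := by
  obtain ⟨hx0, hxrow, hxcol, hxsum⟩ := hx
  have hxun : ∀ k, 0 ≤ util w x k := fun k =>
    Finset.sum_nonneg fun l _ => mul_nonneg (hw k l) (hx0 l k)
  -- existence of a positive outgoing edge for each side-ι agent
  have hedge : ∀ i, side i = ι → ∃ l, 0 < x i l ∧ side l ≠ ι := by
    intro i hi
    have hsum := hxsum i hi
    have hl : ∃ l, 0 < x i l := by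
      by_contra hc
      push_neg at hc
      have h0 : ∀ l, x i l = 0 := fun l => le_antisymm (hc l) (hx0 i l)
      simp [h0] at hsum
    obtain ⟨l, hl⟩ := hl
    refine ⟨l, hl, fun hc => ?_⟩
    rw [hxcol i l hc] at hl; exact lt_irrefl 0 hl
  -- Step A: positivity of utilities
  have hupos : ∀ j, side j ≠ ι → 0 < util w x j := by
    intro j hj
    rcases (hxun j).lt_or_eq with h | h
    · exact h
    exfalso
    obtain ⟨i, hi, hwi⟩ := hmut j
    have hiι : side i = ι := by
      have h1 := bool_ne_iff.mp hi
      have h2 := bool_ne_iff.mp hj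
      rw [h2] at h1; simpa using h1
    obtain ⟨l, hl, hlι⟩ := hedge i hiι
    have hmaxil := hmax i hiι l hl j hj
    obtain ⟨hdl, hle⟩ := of_ratioInf_le hwi.ne' hmaxil
    have hdlpos : 0 < w l i * w i l :=
      lt_of_le_of_ne (mul_nonneg (hw l i) (hw i l)) (Ne.symm hdl)
    have hwli : 0 < w l i := by
      rcases (hw l i).lt_or_eq with h' | h'
      · exact h'
      · exfalso; rw [← h', zero_mul] at hdlpos; exact lt_irrefl 0 hdlpos
    have hsingle : w l i * x i l ≤ util w x l := by
      unfold util
      exact Finset.single_le_sum (f := fun m => w l m * x m l)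
        (fun m _ => mul_nonneg (hw l m) (hx0 m l)) (mem_univ i)
    rw [← h, zero_div] at hle
    have : util w x l ≤ 0 := by
      have := (div_le_iff₀ hdlpos).mp hle
      linarith
    nlinarith
  refine ⟨hupos, ?_, ?_⟩
  · -- existence and uniqueness of the proportional response
    refine ⟨fun j i => if side j = ι then 0 else if side i = ι then
        w j i * x i j / util w x j else 0, ⟨?_, ?_, ?_⟩, ?_⟩
    · intro j hj i; simp [hj]
    · intro j hj i hi; simp [hj, hi]
    · intro j hj i hi; simp [hj, hi]
    · rintro y' ⟨h1, h2, h3⟩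
      funext j i
      by_cases hj : side j = ι
      · simp [hj, h1 j hj i]
      · by_cases hi : side i = ι
        · simp [hj, hi, h3 j hj i hi]
        · simp [hj, hi, h2 j hj i hi]
  · intro y hy
    obtain ⟨hy1, hy2, hy3⟩ := hy
    have hy0 : ∀ i j, 0 ≤ y i j := by
      intro i j
      by_cases hi : side i = ι
      · rw [hy1 i hi j]
      · by_cases hj : side j = ι
        · rw [hy3 i hi j hj]
          exact div_nonneg (mul_nonneg (hw i j) (hx0 j i)) (hxun i)
        · rw [hy2 i hi j hj]
    -- SideAlloc for y
    have hySA : SideAlloc side (!ι) y := by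
      refine ⟨hy0, ?_, ?_, ?_⟩
      · intro i hi j
        have : side i = ι := by simpa using bool_ne_iff.mp hi
        exact hy1 i this j
      · intro i j hj
        have hjι : side j ≠ ι := bool_ne_iff.mpr hj
        by_cases hi : side i = ι
        · exact hy1 i hi j
        · exact hy2 i hi j (by simpa using hjι)
      · intro j hj
        have hjι : side j ≠ ι := bool_ne_iff.mpr hj
        have hval : ∀ i, y j i = w j i * x i j / util w x j := by
          intro i
          by_cases hi : side i = ι
          · exact hy3 j hjι i hi
          · rw [hy2 j hjι i hi, hxrow i hi j, mul_zero, zero_div]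
        calc ∑ i, y j i = ∑ i, w j i * x i j / util w x j :=
              Finset.sum_congr rfl fun i _ => hval i
          _ = (∑ i, w j i * x i j) / util w x j := by rw [Finset.sum_div]
          _ = util w x j / util w x j := rfl
          _ = 1 := div_self (ne_of_gt (hupos j hjι))
    -- the key structural fact about each side-ι agent
    have key : ∀ i, side i = ι → ∃ c : ℝ, 0 < c ∧
        (∀ l, 0 < x i l → (w l i * w i l ≠ 0 ∧ util w x l = c * (w l i * w i l))) ∧
        (∀ k, side k ≠ ι → c * (w k i * w i k) ≤ util w x k) ∧
        util w y i = 1 / c := by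
      intro i hi
      obtain ⟨l0, hl0, hl0ι⟩ := hedge i hi
      obtain ⟨jm, hjm, hwm⟩ := hmut i
      have hjmι : side jm ≠ ι := by rw [hi] at hjm; exact hjm
      have hdm : w jm i * w i jm ≠ 0 := by
        have : 0 < w jm i * w i jm := by nlinarith
        exact this.ne'
      obtain ⟨hd0, -⟩ := of_ratioInf_le hdm (hmax i hi l0 hl0 jm hjmι)
      have hd0pos : 0 < w l0 i * w i l0 :=
        lt_of_le_of_ne (mul_nonneg (hw l0 i) (hw i l0)) (Ne.symm hd0)
      set c := util w x l0 / (w l0 i * w i l0) with hc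
      have hcpos : 0 < c := div_pos (hupos l0 hl0ι) hd0pos
      have edge : ∀ l, 0 < x i l → w l i * w i l ≠ 0 ∧ util w x l = c * (w l i * w i l) := by
        intro l hl
        have hlι : side l ≠ ι := by
          intro hc'; rw [hxcol i l hc'] at hl; exact lt_irrefl 0 hl
        obtain ⟨hdl, hle1⟩ := of_ratioInf_le hd0 (hmax i hi l hl l0 hl0ι)
        obtain ⟨-, hle2⟩ := of_ratioInf_le hdl (hmax i hi l0 hl0 l hlι)
        rw [← hc] at hle1 hle2
        have heq : util w x l / (w l i * w i l) = c := le_antisymm hle1 hle2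
        exact ⟨hdl, (div_eq_iff hdl).mp heq⟩
      have bound : ∀ k, side k ≠ ι → c * (w k i * w i k) ≤ util w x k := by
        intro k hk
        by_cases hdk : w k i * w i k = 0
        · rw [hdk, mul_zero]; exact hxun k
        · obtain ⟨-, hle⟩ := of_ratioInf_le hdk (hmax i hi l0 hl0 k hk)
          rw [← hc] at hle
          have hdkpos : 0 < w k i * w i k :=
            lt_of_le_of_ne (mul_nonneg (hw k i) (hw i k)) (Ne.symm hdk)
          exact (le_div_iff₀ hdkpos).mp hle
      refine ⟨c, hcpos, edge, bound, ?_⟩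
      have hterm : ∀ l, w i l * y l i = x i l / c := by
        intro l
        by_cases hlι : side l = ι
        · rw [hbip i l (hi.trans hlι.symm), hxcol i l hlι, zero_mul, zero_div]
        · rw [hy3 l hlι i hi]
          rcases (hx0 i l).lt_or_eq with h0 | h0
          · obtain ⟨hdl, hul⟩ := edge l h0
            have hwli : w l i ≠ 0 := fun h => hdl (by rw [h, zero_mul])
            have hwil : w i l ≠ 0 := fun h => hdl (by rw [h, mul_zero])
            rw [hul]
            field_simp
          · rw [← h0, mul_zero, zero_div, mul_zero, zero_div]
      calc util w y i = ∑ l, w i l * y l i := rfl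
        _ = ∑ l, x i l / c := Finset.sum_congr rfl fun l _ => hterm l
        _ = (∑ l, x i l) / c := by rw [Finset.sum_div]
        _ = 1 / c := by rw [hxsum i hi]
    -- utilities of the combined pair on side ι agents
    have hz : ∀ m, side m = ι →
        util w (fun l m' => x l m' + y l m') m = util w y m := by
      intro m hm
      unfold util
      refine Finset.sum_congr rfl fun l _ => ?_
      have h0 : x l m = 0 := hxcol l m hm
      show w m l * (x l m + y l m) = w m l * y l m
      rw [h0, zero_add]
    refine ⟨hySA, ?_, ?_, ?_, ?_⟩
    · -- LocMaximin for the combined pair on side !ι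
      intro j hj i hzi k hk
      have hjι : side j ≠ ι := bool_ne_iff.mpr hj
      have hkι : side k = ι := by simpa using bool_ne_iff.mp hk
      have hxji : x j i = 0 := hxrow j hjι i
      have hyji : 0 < y j i := by
        have h' : 0 < x j i + y j i := hzi
        rw [hxji, zero_add] at h'; exact h'
      have hiι : side i = ι := by
        by_contra hiι'
        rw [hy2 j hjι i hiι'] at hyji; exact lt_irrefl 0 hyji
      have hxij : 0 < x i j := by
        rcases (hx0 i j).lt_or_eq with h0 | h0
        · exact h0
        · exfalso
          rw [hy3 j hjι i hiι, ← h0, mul_zero, zero_div] at hyji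
          exact lt_irrefl 0 hyji
      obtain ⟨ci, hci, edgei, boundi, huyi⟩ := key i hiι
      obtain ⟨ck, hck, edgek, boundk, huyk⟩ := key k hkι
      obtain ⟨hdij, huij⟩ := edgei j hxij
      rw [hz i hiι, hz k hkι, huyi, huyk]
      by_cases hdk : w k j * w j k = 0
      · rw [hdk]; exact ratioInf_le_top' _ _ _
      · have hdkpos : 0 < w k j * w j k :=
          lt_of_le_of_ne (mul_nonneg (hw k j) (hw j k)) (Ne.symm hdk)
        have hdijpos : 0 < w j i * w i j :=
          lt_of_le_of_ne (mul_nonneg (hw j i) (hw i j)) (Ne.symm hdij)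
        apply ratioInf_le_ratioInf (by rw [mul_comm]; exact hdij) hdk
        have hL : (1 / ci) / (w i j * w j i) = 1 / util w x j := by
          rw [mul_comm (w i j) (w j i), div_div, ← huij]
        have hR : (1 / ck) / (w k j * w j k) = 1 / (ck * (w k j * w j k)) :=
          div_div 1 ck _
        rw [hL, hR]
        apply one_div_le_one_div_of_le (by positivity)
        have := boundk j hjι
        calc ck * (w k j * w j k) = ck * (w j k * w k j) := by ring
          _ ≤ util w x j := this
    · -- IsPRof side w (!ι) y x, clause 1
      intro j hj i
      exact hxrow j (bool_ne_iff.mpr hj) i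
    · -- clause 2
      intro j hj i hi
      exact hxcol j i (by simpa using bool_ne_iff.mp hi)
    · -- clause 3
      intro j hj i hi
      have hjι : side j = ι := by simpa using bool_ne_iff.mp hj
      have hiι : side i ≠ ι := bool_ne_iff.mpr hi
      obtain ⟨cj, hcj, edgej, boundj, huyj⟩ := key j hjι
      rw [huyj, hy3 i hiι j hjι]
      rcases (hx0 j i).lt_or_eq with h0 | h0
      · obtain ⟨hd, hu⟩ := edgej i h0
        have hwij : w i j ≠ 0 := fun h => hd (by rw [h, zero_mul])
        have hwji : w j i ≠ 0 := fun h => hd (by rw [h, mul_zero])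
        rw [hu]
        field_simp
      · rw [← h0]; simp
end

section
/- There exists a bipartite Arrow-Debreu market on I = I⁰ ⊎ I¹ and a pair of allocations (x⁰, x¹) such that: x⁰ and x¹ are proportional responses to each other, both satisfy the local maximin condition at every agent of their respective sides, yet the combined allocation x is not a market equilibrium — there exist no positive prices p ∈ ℝ^I satisfying both (i) p_i = Σ_j x_{j→i}·p_j for every agent i, and (ii) x_{j→i} > 0 only if j ∈ argmax_{k∈I} w_i(k)/p_k. -/
open Finset

variable {A : Type*} [Fintype A]

def side4 : Fin 4 → Bool := fun i => 2 ≤ i.val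

def w4 : Fin 4 → Fin 4 → ℝ := fun i j =>
  match i, j with
  | 0, 2 => 1 | 0, 3 => 2 | 1, 2 => 2 | 1, 3 => 1 | 2, 0 => 1 | 3, 1 => 1 | _, _ => 0

def xA : Fin 4 → Fin 4 → ℝ := fun i j =>
  match i, j with
  | 0, 2 => 1 | 1, 3 => 1 | _, _ => 0

def xB : Fin 4 → Fin 4 → ℝ := fun i j =>
  match i, j with
  | 2, 0 => 1 | 3, 1 => 1 | _, _ => 0

/-- **A locally maximin allocation need not be an equilibrium in Arrow-Debreu markets.**
There is a bipartite Arrow-Debreu market and a pair of allocations `(x0, x1)` that are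
proportional responses to each other and locally maximin at every agent of their respective
sides, yet the combined allocation is not a market equilibrium: no positive prices `p`
satisfy both `p_i = Σ_j x_{j→i}·p_j` for every `i` and the best-ratio spending condition. -/
theorem locally_maximin_not_equilibrium_in_AD :
    ∃ (n : ℕ) (side : Fin n → Bool) (w x0 x1 : Fin n → Fin n → ℝ),
      (∀ i j, 0 ≤ w i j) ∧
      (∀ i j, side i = side j → w i j = 0) ∧
      SideAlloc side false x0 ∧ SideAlloc side true x1 ∧
      IsPRof side w false x0 x1 ∧ IsPRof side w true x1 x0 ∧
      LocMaximin side w false (fun l m => x0 l m + x1 l m) ∧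
      LocMaximin side w true (fun l m => x0 l m + x1 l m) ∧
      ¬ ∃ p : Fin n → ℝ, (∀ i, 0 < p i) ∧
          (∀ i, p i = ∑ j, (x0 j i + x1 j i) * p j) ∧
          (∀ i j, 0 < x0 j i + x1 j i → ∀ k, w i k / p k ≤ w i j / p j) := by
  refine ⟨4, side4, w4, xA, xB, ?_, ?_, ?_, ?_, ?_, ?_, ?_, ?_, ?_⟩
  · intro i j; fin_cases i <;> fin_cases j <;> simp [w4]
  · intro i j h; fin_cases i <;> fin_cases j <;> simp_all [w4, side4]
  · refine ⟨?_, ?_, ?_, ?_⟩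
    · intro i j; fin_cases i <;> fin_cases j <;> simp [xA]
    · intro i hi j; fin_cases i <;> fin_cases j <;> simp_all [xA, side4]
    · intro i j hj; fin_cases i <;> fin_cases j <;> simp_all [xA, side4]
    · intro i hi; fin_cases i <;> simp_all [xA, side4, Fin.sum_univ_four]
  · refine ⟨?_, ?_, ?_, ?_⟩
    · intro i j; fin_cases i <;> fin_cases j <;> simp [xB]
    · intro i hi j; fin_cases i <;> fin_cases j <;> simp_all [xB, side4]
    · intro i j hj; fin_cases i <;> fin_cases j <;> simp_all [xB, side4]
    · intro i hi; fin_cases i <;> simp_all [xB, side4, Fin.sum_univ_four]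
  · refine ⟨?_, ?_, ?_⟩
    · intro j hj i; fin_cases j <;> fin_cases i <;> simp_all [xB, side4]
    · intro j hj i hi; fin_cases j <;> fin_cases i <;> simp_all [xB, side4]
    · intro j hj i hi; fin_cases j <;> fin_cases i <;>
        simp_all [util, Fin.sum_univ_four, w4, xA, xB, side4]
  · refine ⟨?_, ?_, ?_⟩
    · intro j hj i; fin_cases j <;> fin_cases i <;> simp_all [xA, side4]
    · intro j hj i hi; fin_cases j <;> fin_cases i <;> simp_all [xA, side4]
    · intro j hj i hi; fin_cases j <;> fin_cases i <;>
        simp_all [util, Fin.sum_univ_four, w4, xA, xB, side4]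
  · intro i hi j hj k hk
    fin_cases i <;> fin_cases j <;> fin_cases k <;>
      simp_all [util, Fin.sum_univ_four, ratioInf, w4, xA, xB, side4]
  · intro i hi j hj k hk
    fin_cases i <;> fin_cases j <;> fin_cases k <;>
      simp_all [util, Fin.sum_univ_four, ratioInf, w4, xA, xB, side4]
  · rintro ⟨p, hp, _, hmax⟩
    have h1 := hmax 0 2 (by simp [xA, xB]) 3
    have h2 := hmax 1 3 (by simp [xA, xB]) 2
    simp only [w4] at h1 h2
    have p2 := hp 2; have p3 := hp 3
    rw [div_le_div_iff₀ (by positivity) (by positivity)] at h1 h2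
    nlinarith
end

section
/- Let H = (V, E) be a hypergraph with positive node weights and positive edge weights, and let α* ∈ K(H) be a minimizer of the objective Q over K(H), with induced density vector ρ*. Then for every α ∈ K(H) with induced density vector ρ, ‖ρ − ρ*‖_w² ≤ Q(α) − Q(α*). -/
open Finset

variable {V : Type*} [DecidableEq V] [Fintype V]

/-- `a ∈ K(H)`: each hyperedge `e` distributes its weight `wE e` among its own nodes. -/
def InK (E : Finset (Finset V)) (wE : Finset V → ℝ) (a : Finset V → V → ℝ) : Prop :=
  (∀ e i, 0 ≤ a e i) ∧ (∀ e ∈ E, ∀ i, i ∉ e → a e i = 0) ∧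
    ∀ e ∈ E, ∑ i ∈ e, a e i = wE e

/-- Payload `p_i = Σ_{e ∋ i} a_{e→i}` received by node `i`. -/
noncomputable def hPayload (E : Finset (Finset V)) (a : Finset V → V → ℝ) (i : V) : ℝ :=
  ∑ e ∈ E, a e i

/-- Density `ρ_i = p_i / w_i` of node `i`. -/
noncomputable def hDensity (E : Finset (Finset V)) (wV : V → ℝ)
    (a : Finset V → V → ℝ) (i : V) : ℝ :=
  hPayload E a i / wV i

/-- Quadratic objective `Q(a) = Σ_i p_i² / w_i`. -/
noncomputable def Qobj (E : Finset (Finset V)) (wV : V → ℝ) (a : Finset V → V → ℝ) : ℝ :=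
  ∑ i, hPayload E a i ^ 2 / wV i

/-- **Additive error for the quadratic program controls the density vector.**
If `astar` minimizes `Q` over `K(H)` with induced density vector `ρ*`, then for every
`a ∈ K(H)` with induced density vector `ρ`, `‖ρ − ρ*‖_w² ≤ Q(a) − Q(astar)`, where
`‖ρ‖_w² = Σ_i w_i ρ_i²`. -/
theorem quadratic_additive_error_controls_density
    (E : Finset (Finset V)) (hE : ∀ e ∈ E, e.Nonempty)
    (wV : V → ℝ) (hwV : ∀ i, 0 < wV i)
    (wE : Finset V → ℝ) (hwE : ∀ e ∈ E, 0 < wE e)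
    (astar : Finset V → V → ℝ) (hstar : InK E wE astar)
    (hmin : ∀ a, InK E wE a → Qobj E wV astar ≤ Qobj E wV a)
    (a : Finset V → V → ℝ) (ha : InK E wE a) :
    ∑ i, wV i * (hDensity E wV a i - hDensity E wV astar i) ^ 2 ≤
      Qobj E wV a - Qobj E wV astar := by
  set p : V → ℝ := hPayload E astar with hp
  set q : V → ℝ := hPayload E a with hq
  set d : V → ℝ := fun i => q i - p i with hd
  set S : ℝ := ∑ i, p i * d i / wV i with hS
  set N : ℝ := ∑ i, d i ^ 2 / wV i with hN
  have hwne : ∀ i, wV i ≠ 0 := fun i => (hwV i).ne'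
  -- payload of the convex combination
  have hpay : ∀ t : ℝ, ∀ i,
      hPayload E (fun e i => astar e i + t * (a e i - astar e i)) i = p i + t * d i := by
    intro t i
    simp only [hPayload, Finset.sum_add_distrib, ← Finset.mul_sum, Finset.sum_sub_distrib]
    simp [hp, hq, hd, hPayload]
  -- objective of the convex combination
  have hQt : ∀ t : ℝ,
      Qobj E wV (fun e i => astar e i + t * (a e i - astar e i)) =
        Qobj E wV astar + 2 * t * S + t ^ 2 * N := by
    intro t
    simp only [Qobj, hS, hN, Finset.mul_sum, ← Finset.sum_add_distrib]
    refine Finset.sum_congr rfl fun i _ => ?_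
    rw [hpay t i]
    field_simp
    ring
  -- the convex combination lies in K
  have hmem : ∀ t : ℝ, 0 ≤ t → t ≤ 1 →
      InK E wE (fun e i => astar e i + t * (a e i - astar e i)) := by
    intro t ht0 ht1
    obtain ⟨h1, h2, h3⟩ := hstar
    obtain ⟨g1, g2, g3⟩ := ha
    refine ⟨fun e i => ?_, fun e he i hi => ?_, fun e he => ?_⟩
    · show 0 ≤ astar e i + t * (a e i - astar e i)
      nlinarith [mul_nonneg (sub_nonneg.2 ht1) (h1 e i), mul_nonneg ht0 (g1 e i)]
    · simp [h2 e he i hi, g2 e he i hi]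
    · rw [Finset.sum_add_distrib, h3 e he, ← Finset.mul_sum, Finset.sum_sub_distrib,
        h3 e he, g3 e he]
      ring
  have hNnn : 0 ≤ N := Finset.sum_nonneg fun i _ => div_nonneg (sq_nonneg _) (hwV i).le
  -- nonnegativity of the first-order term
  have hS0 : 0 ≤ S := by
    by_contra hneg
    push_neg at hneg
    set t : ℝ := min 1 (-S / (N + 1)) with htdef
    have ht0 : 0 < t := lt_min one_pos (div_pos (by linarith) (by linarith))
    have ht1 : t ≤ 1 := min_le_left _ _
    have hkey := hmin _ (hmem t ht0.le ht1)
    rw [hQt t] at hkey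
    have h2 : 0 ≤ 2 * t * S + t ^ 2 * N := by linarith
    have htN : t * N ≤ -S := by
      calc t * N ≤ (-S / (N + 1)) * N := by
            apply mul_le_mul_of_nonneg_right (min_le_right _ _) hNnn
        _ ≤ -S := by
            rw [div_mul_eq_mul_div, div_le_iff₀ (by linarith : (0:ℝ) < N + 1)]
            nlinarith
    nlinarith
  -- combine
  have hgoal : ∑ i, wV i * (hDensity E wV a i - hDensity E wV astar i) ^ 2 = N := by
    refine Finset.sum_congr rfl fun i _ => ?_
    have hw := hwne i
    simp only [hDensity, hN, hd, ← hp, ← hq]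
    field_simp
  have hQa : Qobj E wV a - Qobj E wV astar = 2 * S + N := by
    have heq : (fun e i => astar e i + (1:ℝ) * (a e i - astar e i)) = a := by
      funext e i; ring
    have := hQt 1
    rw [heq] at this
    norm_num at this
    linarith
  rw [hgoal, hQa]
  linarith
end
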